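/- Let n be a positive integer, A : ℝ → (n×n real matrices) a matrix-valued function, ℰ and E real numbers. Let σ : ℝ → (n×n real matrices) be twice differentiable with σ(r) invertible for all r and σ''(r) = (A(r) − ℰ·I)σ(r), and set U(r) = σ'(r)σ(r)⁻¹. If ψ : ℝ → (n×n real matrices, or n-component real vectors) is twice differentiable and satisfies ψ''(r) = (A(r) − E·I)ψ(r), then the transformed function ψ̃(r) := −ψ'(r) + U(r)ψ(r) satisfies ψ̃''(r) = (A(r) − 2U'(r) − E·I)ψ̃(r). -/

import Mathlib

open Matrix

attribute [local instance] Matrix.linftyOpNormedAddCommGroup Matrix.linftyOpNormedRing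
  Matrix.linftyOpNormedAlgebra

private noncomputable def matPiCLE (n : ℕ) :
    Matrix (Fin n) (Fin n) ℝ ≃L[ℝ] (Fin n → Fin n → ℝ) :=
  ((Matrix.ofLinearEquiv ℝ).symm :
    Matrix (Fin n) (Fin n) ℝ ≃ₗ[ℝ] (Fin n → Fin n → ℝ)).toContinuousLinearEquiv

private lemma hasDerivAt_matrix {n : ℕ} {M : ℝ → Matrix (Fin n) (Fin n) ℝ}
    {M' : Matrix (Fin n) (Fin n) ℝ} {r : ℝ} :
    HasDerivAt M M' r ↔ ∀ i j, HasDerivAt (fun s => M s i j) (M' i j) r := by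
  constructor
  · intro h i j
    have h1 := ((matPiCLE n).hasFDerivAt).comp_hasDerivAt r h
    exact hasDerivAt_pi.1 (hasDerivAt_pi.1 h1 i) j
  · intro h
    have h1 : HasDerivAt (fun s => (matPiCLE n) (M s)) ((matPiCLE n) M') r :=
      hasDerivAt_pi.2 fun i => hasDerivAt_pi.2 fun j => h i j
    have h2 := ((matPiCLE n).symm.hasFDerivAt).comp_hasDerivAt r h1
    have h3 : HasDerivAt M M' r := by
      simp only [Function.comp_def] at h2
      exact h2
    exact h3

private lemma hasDerivAt_matrix_inv {n : ℕ}
    {σ : ℝ → Matrix (Fin n) (Fin n) ℝ} {σd : Matrix (Fin n) (Fin n) ℝ} {r : ℝ}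
    (hσ' : HasDerivAt σ σd r) (hσinv : IsUnit (σ r)) :
    HasDerivAt (fun s => (σ s)⁻¹) (-((σ r)⁻¹ * σd * (σ r)⁻¹)) r := by
  obtain ⟨u, hu⟩ := hσinv
  have h0 : HasFDerivAt Ring.inverse
      (-(ContinuousLinearMap.mulLeftRight ℝ _ ↑u⁻¹ ↑u⁻¹)) (σ r) := by
    rw [← hu]; exact hasFDerivAt_ringInverse u
  have h1 := h0.comp_hasDerivAt r hσ'
  have h2 : (fun s => Ring.inverse (σ s)) = fun s => (σ s)⁻¹ := by
    funext s; rw [Matrix.nonsing_inv_eq_ringInverse]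
  have h3 : (↑u⁻¹ : Matrix (Fin n) (Fin n) ℝ) = (σ r)⁻¹ := by
    rw [← hu, Matrix.coe_units_inv]
  have h4 : HasDerivAt (fun s => Ring.inverse (σ s))
      (-((σ r)⁻¹ * σd * (σ r)⁻¹)) r := by
    simp only [Function.comp_def, h3, ContinuousLinearMap.neg_apply, ContinuousLinearMap.mulLeftRight_apply, mul_assoc] at h1
    rw [mul_assoc]; exact h1
  rw [h2] at h4
  exact h4

/-- The fundamental multichannel SUSY (matrix Darboux) transformation: if
`σ'' = (A - ℰ)σ` with `σ(r)` invertible, `U = σ'σ⁻¹`, and `ψ'' = (A - E)ψ`, then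
`ψ̃ = -ψ' + Uψ` satisfies `ψ̃'' = (A - 2U' - E)ψ̃`. -/
theorem multichannel_susy_transformation
    (n : ℕ) (hn : 0 < n)
    (A : ℝ → Matrix (Fin n) (Fin n) ℝ) (ℰ E : ℝ)
    (σ σd σdd : ℝ → Matrix (Fin n) (Fin n) ℝ)
    (hσ : ∀ r i j, HasDerivAt (fun s => σ s i j) (σd r i j) r)
    (hσd : ∀ r i j, HasDerivAt (fun s => σd s i j) (σdd r i j) r)
    (hσinv : ∀ r, IsUnit (σ r))
    (hσeq : ∀ r, σdd r = (A r - ℰ • (1 : Matrix (Fin n) (Fin n) ℝ)) * σ r)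
    (ψ ψd ψdd : ℝ → Matrix (Fin n) (Fin n) ℝ)
    (hψ : ∀ r i j, HasDerivAt (fun s => ψ s i j) (ψd r i j) r)
    (hψd : ∀ r i j, HasDerivAt (fun s => ψd s i j) (ψdd r i j) r)
    (hψeq : ∀ r, ψdd r = (A r - E • (1 : Matrix (Fin n) (Fin n) ℝ)) * ψ r) :
    let U : ℝ → Matrix (Fin n) (Fin n) ℝ := fun r => σd r * (σ r)⁻¹
    let Ud : ℝ → Matrix (Fin n) (Fin n) ℝ := fun r =>
      Matrix.of fun i j => deriv (fun s => U s i j) r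
    let ψt : ℝ → Matrix (Fin n) (Fin n) ℝ := fun r => -ψd r + U r * ψ r
    ∀ (r : ℝ) (i j : Fin n),
      deriv (fun t => deriv (fun s => ψt s i j) t) r
        = ((A r - (2 : ℝ) • Ud r - E • (1 : Matrix (Fin n) (Fin n) ℝ)) * ψt r) i j := by
  intro U Ud ψt
  have hσ' : ∀ r, HasDerivAt σ (σd r) r := fun r => hasDerivAt_matrix.2 (hσ r)
  have hσd' : ∀ r, HasDerivAt σd (σdd r) r := fun r => hasDerivAt_matrix.2 (hσd r)
  have hψ' : ∀ r, HasDerivAt ψ (ψd r) r := fun r => hasDerivAt_matrix.2 (hψ r)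
  have hψd' : ∀ r, HasDerivAt ψd (ψdd r) r := fun r => hasDerivAt_matrix.2 (hψd r)
  have hinv : ∀ r, HasDerivAt (fun s => (σ s)⁻¹) (-((σ r)⁻¹ * σd r * (σ r)⁻¹)) r :=
    fun r => hasDerivAt_matrix_inv (hσ' r) (hσinv r)
  -- derivative of U
  have hU : ∀ r, HasDerivAt U
      (A r - ℰ • (1 : Matrix (Fin n) (Fin n) ℝ) - U r * U r) r := by
    intro r
    have h := (hσd' r).mul (hinv r)
    have hσσ : σ r * (σ r)⁻¹ = 1 :=
      Matrix.mul_nonsing_inv _ ((Matrix.isUnit_iff_isUnit_det _).1 (hσinv r))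
    have hval : σdd r * (σ r)⁻¹ + σd r * -((σ r)⁻¹ * σd r * (σ r)⁻¹)
        = A r - ℰ • (1 : Matrix (Fin n) (Fin n) ℝ) - U r * U r := by
      rw [hσeq r]
      simp only [U, mul_neg, mul_assoc, hσσ, mul_one]
      abel
    rw [← hval]
    exact h
  -- value of Ud
  have hUdval : ∀ r, Ud r = A r - ℰ • (1 : Matrix (Fin n) (Fin n) ℝ) - U r * U r := by
    intro r
    ext i j
    simp only [Ud, Matrix.of_apply]
    exact (hasDerivAt_matrix.1 (hU r) i j).deriv
  -- derivative of ψt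
  have hψt : ∀ r, HasDerivAt ψt ((E - ℰ) • ψ r - U r * ψt r) r := by
    intro r
    have h := ((hψd' r).neg).add ((hU r).mul (hψ' r))
    have hval : -ψdd r + ((A r - ℰ • (1 : Matrix (Fin n) (Fin n) ℝ) - U r * U r) * ψ r
          + U r * ψd r)
        = (E - ℰ) • ψ r - U r * ψt r := by
      rw [hψeq r]
      simp only [ψt, sub_mul, smul_mul_assoc, one_mul, mul_add, mul_neg, mul_sub,
        sub_smul, mul_assoc, neg_add, neg_sub, neg_neg]
      abel
    rw [← hval]
    exact h
  intro r i j
  -- rewrite the inner deriv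
  have h1 : (fun t => deriv (fun s => ψt s i j) t)
      = fun t => ((E - ℰ) • ψ t - U t * ψt t) i j := by
    funext t
    exact (hasDerivAt_matrix.1 (hψt t) i j).deriv
  rw [h1]
  -- derivative of the outer function
  have hG : HasDerivAt (fun t => (E - ℰ) • ψ t - U t * ψt t)
      ((E - ℰ) • ψd r - ((A r - ℰ • (1 : Matrix (Fin n) (Fin n) ℝ) - U r * U r) * ψt r
        + U r * ((E - ℰ) • ψ r - U r * ψt r))) r :=
    ((hψ' r).const_smul (E - ℰ)).sub ((hU r).mul (hψt r))
  rw [(hasDerivAt_matrix.1 hG i j).deriv]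
  -- final matrix algebra
  have hfinal : (E - ℰ) • ψd r - ((A r - ℰ • (1 : Matrix (Fin n) (Fin n) ℝ) - U r * U r) * ψt r
        + U r * ((E - ℰ) • ψ r - U r * ψt r))
      = (A r - (2 : ℝ) • Ud r - E • (1 : Matrix (Fin n) (Fin n) ℝ)) * ψt r := by
    rw [hUdval r]
    have hψdval : ψd r = U r * ψ r - ψt r := by simp only [ψt]; abel
    rw [hψdval]
    simp only [add_mul, sub_mul, smul_mul_assoc, one_mul, mul_sub, mul_add,
      mul_smul_comm, mul_assoc, smul_sub, smul_smul]
    module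
  rw [hfinal]
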